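/- Let b ∈ (0, +∞] and let (H, φ) solve the EdGB FLRW system on [0, b) with the negative-branch initial data with parameter β. Then H(t) < 1/((1/2)t + 1/β) for all t ∈ (0, b). -/

import Mathlib

open Real Set Filter


/-- The EdGB FLRW system on a set `I ⊆ ℝ`: `H` is continuously differentiable and
`φ` twice continuously differentiable on `I`, and for every `t ∈ I` the Hamiltonian
constraint `3H² − 3e^φ φ' H³ = φ'²/2` and the scalar field equation
`φ'' = −3Hφ' − 3e^φ H²(H² + H')` hold. -/
def EdGB (H φ : ℝ → ℝ) (I : Set ℝ) : Prop :=
  ContDiffOn ℝ 1 H I ∧ ContDiffOn ℝ 2 φ I ∧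
  (∀ t ∈ I, 3 * H t ^ 2 - 3 * Real.exp (φ t) * deriv φ t * H t ^ 3 = (deriv φ t) ^ 2 / 2) ∧
  (∀ t ∈ I, deriv (deriv φ) t =
      -3 * H t * deriv φ t - 3 * Real.exp (φ t) * H t ^ 2 * (H t ^ 2 + deriv H t))

/-- The negative-branch initial data with parameter `β`:
`H(0) = β`, `φ(0) = 0`, `φ'(0) = −3β³ − √(9β⁶ + 6β²)`, with `0 < β < √6/6`. -/
def NegBranchData (H φ : ℝ → ℝ) (β : ℝ) : Prop :=
  0 < β ∧ β < Real.sqrt 6 / 6 ∧ H 0 = β ∧ φ 0 = 0 ∧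
  deriv φ 0 = -3 * β ^ 3 - Real.sqrt (9 * β ^ 6 + 6 * β ^ 2)


private lemma ptwise (h d e h' d' : ℝ) (hh : 0 < h) (he : 0 < e)
    (hx : e * h ^ 2 < 1 / 6) (hd : d < 0)
    (c1 : 3 * h ^ 2 - 3 * e * d * h ^ 3 = d ^ 2 / 2)
    (c2 : d' = -3 * h * d - 3 * e * h ^ 2 * (h ^ 2 + h'))
    (c3 : 6 * h * h' - 3 * (e * d * d * h ^ 3 + e * d' * h ^ 3 + e * d * (3 * h ^ 2 * h')) - d * d' = 0) :
    h' < -h ^ 2 / 2 ∧ -3 * h ^ 2 ≤ h' := by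
  have hed : 0 < -(e*d) := by simpa [mul_neg] using mul_pos he (neg_pos.mpr hd)
  have R : h' * (6*h + 9*e^2*h^5 - 6*e*d*h^2)
      = -(3*h*d^2 - 3*e*d^2*h^3 + 12*e*h^4*d + 9*e^2*h^7) := by
    linear_combination c3 + (3*e*h^3 + d) * c2
  have hA : 0 < 6*h + 9*e^2*h^5 - 6*e*d*h^2 := by
    nlinarith [pow_pos hh 5, sq_nonneg e, mul_pos hed (pow_pos hh 2), mul_pos (mul_pos (mul_pos he he) (pow_pos hh 4)) hh]
  have key1 : (6*h + 9*e^2*h^5 - 6*e*d*h^2) * (-h^2/2 - h')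
      = (3/2)*h^3*(10 - 12*(e*h^2) + 3*(e*h^2)^2) + 3*(e*d)*h^4*(6*(e*h^2) - 1) := by
    linear_combination (-1 : ℝ) * R + (-6*h + 6*e*h^3) * c1
  have key2 : (6*h + 9*e^2*h^5 - 6*e*d*h^2) * (h' + 3*h^2)
      = 18*e^2*h^7 - 12*e*d*h^4 + 18*e*h^5 - 18*e^2*d*h^6 := by
    linear_combination R + (6*h - 6*e*h^3) * c1
  have hx0 : 0 < e * h ^ 2 := mul_pos he (pow_pos hh 2)
  have hP1 : 0 < (3/2)*h^3*(10 - 12*(e*h^2) + 3*(e*h^2)^2) + 3*(e*d)*h^4*(6*(e*h^2) - 1) := by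
    have t1 : 0 < (3/2)*h^3*(10 - 12*(e*h^2) + 3*(e*h^2)^2) := by
      have : 0 < 10 - 12*(e*h^2) + 3*(e*h^2)^2 := by nlinarith [sq_nonneg (e*h^2)]
      positivity
    have t2 : 0 ≤ 3*(e*d)*h^4*(6*(e*h^2) - 1) := by
      have h2 : 0 < 1 - 6*(e*h^2) := by linarith
      nlinarith [mul_pos (mul_pos hed h2) (pow_pos hh 4)]
    linarith
  have hP2 : 0 ≤ 18*e^2*h^7 - 12*e*d*h^4 + 18*e*h^5 - 18*e^2*d*h^6 := by
    nlinarith [mul_pos (mul_pos he he) (pow_pos hh 7), mul_pos he (pow_pos hh 5),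
      mul_pos hed (pow_pos hh 4), mul_pos (mul_pos hed he) (pow_pos hh 6)]
  constructor
  · by_contra h0
    push_neg at h0
    have : (6*h + 9*e^2*h^5 - 6*e*d*h^2) * (-h^2/2 - h') ≤ 0 :=
      mul_nonpos_of_nonneg_of_nonpos (le_of_lt hA) (by linarith)
    linarith [key1 ▸ this]
  · by_contra h0
    push_neg at h0
    have : (6*h + 9*e^2*h^5 - 6*e*d*h^2) * (h' + 3*h^2) < 0 :=
      mul_neg_of_pos_of_neg hA (by linarith)
    linarith [key2 ▸ this]

private lemma constraint_deriv (H φ : ℝ → ℝ) (O : Set ℝ) (hO : IsOpen O)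
    (hH : ContDiffOn ℝ 1 H O) (hφ : ContDiffOn ℝ 2 φ O)
    (hcon : ∀ s ∈ O, 3 * H s ^ 2 - 3 * Real.exp (φ s) * deriv φ s * H s ^ 3 = (deriv φ s) ^ 2 / 2)
    (s : ℝ) (hs : s ∈ O) :
    6 * H s * deriv H s - 3 * (Real.exp (φ s) * deriv φ s * deriv φ s * H s ^ 3
        + Real.exp (φ s) * deriv (deriv φ) s * H s ^ 3
        + Real.exp (φ s) * deriv φ s * (3 * H s ^ 2 * deriv H s))
      - deriv φ s * deriv (deriv φ) s = 0 := by
  have hOn : O ∈ nhds s := hO.mem_nhds hs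
  have hHd : HasDerivAt H (deriv H s) s :=
    ((hH.differentiableOn one_ne_zero).differentiableAt hOn).hasDerivAt
  have hφd : HasDerivAt φ (deriv φ s) s :=
    ((hφ.differentiableOn (by norm_num)).differentiableAt hOn).hasDerivAt
  have hD1 : ContDiffOn ℝ 1 (deriv φ) O := hφ.deriv_of_isOpen hO (by norm_num)
  have hDd : HasDerivAt (deriv φ) (deriv (deriv φ) s) s :=
    ((hD1.differentiableOn one_ne_zero).differentiableAt hOn).hasDerivAt
  have hEd : HasDerivAt (fun u => Real.exp (φ u)) (Real.exp (φ s) * deriv φ s) s := hφd.exp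
  set F : ℝ → ℝ := fun u => 3 * H u ^ 2 - 3 * Real.exp (φ u) * deriv φ u * H u ^ 3
      - (deriv φ u) ^ 2 / 2 with hF
  have hFd : HasDerivAt F (6 * H s * deriv H s
      - 3 * (Real.exp (φ s) * deriv φ s * deriv φ s * H s ^ 3
        + Real.exp (φ s) * deriv (deriv φ) s * H s ^ 3
        + Real.exp (φ s) * deriv φ s * (3 * H s ^ 2 * deriv H s))
      - deriv φ s * deriv (deriv φ) s) s := by
    have h1 : HasDerivAt (fun u => 3 * H u ^ 2) (3 * (2 * H s * deriv H s)) s := by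
      simpa using ((hHd.pow 2).const_mul (3:ℝ))
    have h2 : HasDerivAt (fun u => 3 * Real.exp (φ u) * deriv φ u * H u ^ 3)
        (3 * ((Real.exp (φ s) * deriv φ s * deriv φ s + Real.exp (φ s) * deriv (deriv φ) s) * H s ^ 3
          + Real.exp (φ s) * deriv φ s * (3 * H s ^ 2 * deriv H s))) s := by
      have := ((hEd.fun_mul hDd).fun_mul (hHd.fun_pow 3)).const_mul (3:ℝ)
      convert this using 1 <;> first
        | rfl
        | (funext u; ring)
        | (push_cast; ring)
    have h3 : HasDerivAt (fun u => (deriv φ u) ^ 2 / 2)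
        (2 * deriv φ s * deriv (deriv φ) s / 2) s := by
      simpa using ((hDd.pow 2).div_const (2:ℝ))
    have := (h1.fun_sub h2).fun_sub h3
    refine this.congr_deriv ?_
    ring
  have hF0 : HasDerivAt F 0 s := by
    have heq : F =ᶠ[nhds s] (fun _ => (0:ℝ)) := by
      filter_upwards [hOn] with u hu
      have := hcon u hu
      simp only [hF]
      linarith
    exact (hasDerivAt_const s (0:ℝ)).congr_of_eventuallyEq heq
  exact hFd.unique hF0

/-- If `(H, φ)` solves the EdGB FLRW system on `[0, b)` (with `b ∈ (0, +∞]`) with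
the negative-branch initial data with parameter `β`, then
`H(t) < 1/((1/2)t + 1/β)` for all `t ∈ (0, b)`. -/
theorem stmt_10 (b : EReal) (hb : 0 < b) (β : ℝ) (H φ : ℝ → ℝ)
    (hsys : EdGB H φ {t : ℝ | 0 ≤ t ∧ (t : EReal) < b})
    (hdata : NegBranchData H φ β) :
    ∀ t : ℝ, 0 < t → (t : EReal) < b →
      H t < 1 / ((1 / 2) * t + 1 / β) := by
  obtain ⟨hβ0, hβ6, hH0, hφ0, hD0⟩ := hdata
  obtain ⟨hCH, hCφ, hcon, hscal⟩ := hsys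
  intro t ht htb
  set I : Set ℝ := {t : ℝ | 0 ≤ t ∧ (t : EReal) < b} with hI
  have hIccI : Icc 0 t ⊆ I := by
    intro s hs
    exact ⟨hs.1, lt_of_le_of_lt (EReal.coe_le_coe_iff.mpr hs.2) htb⟩
  have hIooI : Ioo 0 t ⊆ I := fun s hs => hIccI ⟨le_of_lt hs.1, le_of_lt hs.2⟩
  have hO : IsOpen (Ioo (0:ℝ) t) := isOpen_Ioo
  -- continuity facts
  have contH : ContinuousOn H (Icc 0 t) := (hCH.continuousOn).mono hIccI
  have contφ : ContinuousOn φ (Icc 0 t) := (hCφ.continuousOn).mono hIccI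
  have contX : ContinuousOn (fun s => Real.exp (φ s) * H s ^ 2) (Icc 0 t) :=
    (Real.continuous_exp.comp_continuousOn contφ).mul (contH.pow 2)
  have hD1t : ContDiffOn ℝ 1 (deriv φ) (Ioo 0 t) :=
    (hCφ.mono hIooI).deriv_of_isOpen hO (by norm_num)
  have hDcont : ContinuousOn (deriv φ) (Ioo 0 t) := hD1t.continuousOn
  have hHder : ∀ s ∈ Ioo 0 t, HasDerivAt H (deriv H s) s := by
    intro s hs
    exact (((hCH.mono hIooI).differentiableOn one_ne_zero).differentiableAt
      (hO.mem_nhds hs)).hasDerivAt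
  have hφder : ∀ s ∈ Ioo 0 t, HasDerivAt φ (deriv φ s) s := by
    intro s hs
    exact (((hCφ.mono hIooI).differentiableOn (by norm_num)).differentiableAt
      (hO.mem_nhds hs)).hasDerivAt
  -- pointwise bound on deriv H
  have ptb : ∀ s ∈ Ioo 0 t, 0 < H s → deriv φ s < 0 → Real.exp (φ s) * H s ^ 2 < 1/6 →
      deriv H s < -(H s)^2/2 ∧ -3*(H s)^2 ≤ deriv H s := by
    intro s hs hh hd hx
    have c3 := constraint_deriv H φ (Ioo 0 t) hO (hCH.mono hIooI) (hCφ.mono hIooI)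
      (fun u hu => hcon u (hIooI hu)) s hs
    have c1 := hcon s (hIooI hs)
    have c2 := hscal s (hIooI hs)
    have := ptwise (H s) (deriv φ s) (Real.exp (φ s)) (deriv H s) (deriv (deriv φ) s)
      hh (Real.exp_pos _) hx hd (by linarith [c1]) (by linarith [c2]) (by linarith [c3])
    exact ⟨by linarith [this.1], this.2⟩
  -- initial data facts
  have hsq6 : (Real.sqrt 6 / 6)^2 = 1/6 := by
    rw [div_pow, Real.sq_sqrt (by norm_num : (6:ℝ) ≥ 0)]
    norm_num
  have hβ2 : β^2 < 1/6 := by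
    have h1 : β^2 < (Real.sqrt 6 / 6)^2 := by
      apply sq_lt_sq' _ hβ6
      have := Real.sqrt_nonneg 6
      nlinarith
    rw [hsq6] at h1; exact h1
  have d0neg : deriv φ 0 < 0 := by
    rw [hD0]
    have := Real.sqrt_nonneg (9 * β ^ 6 + 6 * β ^ 2)
    nlinarith [pow_pos hβ0 3]
  have hφd0 : HasDerivAt φ (deriv φ 0) 0 := by
    have : DifferentiableAt ℝ φ 0 := by
      by_contra hnd
      rw [deriv_zero_of_not_differentiableAt hnd] at d0neg
      exact lt_irrefl 0 d0neg
    exact this.hasDerivAt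
  -- negativity of deriv φ on intervals where H > 0
  have Dneg : ∀ c, 0 < c → c ≤ t → (∀ s ∈ Ioo 0 c, 0 < H s) →
      ∀ s ∈ Ioo 0 c, deriv φ s < 0 := by
    intro c hc0 hct hpos s hsI
    have hsub : Ioo 0 c ⊆ Ioo 0 t := Ioo_subset_Ioo le_rfl hct
    have hne : ∀ u ∈ Ioo 0 c, deriv φ u ≠ 0 := by
      intro u hu h0
      have hcu := hcon u (hIooI (hsub hu))
      rw [h0] at hcu
      have hHu := hpos u hu
      nlinarith [hcu]
    by_contra hc
    push_neg at hc
    have hspos : 0 < deriv φ s := lt_of_le_of_ne hc (Ne.symm (hne s hsI))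
    have hall : ∀ u ∈ Ioo 0 c, u ≤ s → 0 < deriv φ u := by
      intro u hu hus
      rcases lt_trichotomy (deriv φ u) 0 with hneg | h0 | hposu
      · exfalso
        have hIccsub : Icc u s ⊆ Ioo 0 c := fun w hw => ⟨lt_of_lt_of_le hu.1 hw.1,
          lt_of_le_of_lt hw.2 hsI.2⟩
        have hcontD : ContinuousOn (deriv φ) (Icc u s) := hDcont.mono
          (fun w hw => hsub (hIccsub hw))
        have h0mem : (0:ℝ) ∈ Icc (deriv φ u) (deriv φ s) := ⟨le_of_lt hneg, le_of_lt hspos⟩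
        obtain ⟨w, hw, hw0⟩ := intermediate_value_Icc hus hcontD h0mem
        exact hne w (hIccsub hw) hw0
      · exact absurd h0 (hne u hu)
      · exact hposu
    have hslope : ∀ r, 0 < r → r ≤ s → 0 ≤ (φ r - φ 0) / (r - 0) := by
      intro r hr0 hrs
      have hIccr : Icc 0 r ⊆ Icc 0 t := Icc_subset_Icc le_rfl
        (le_trans hrs (le_trans (le_of_lt hsI.2) hct))
      have hcφr : ContinuousOn φ (Icc 0 r) := contφ.mono hIccr
      have hdφr : ∀ u ∈ Ioo 0 r, HasDerivAt φ (deriv φ u) u := by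
        intro u hu
        exact hφder u ⟨hu.1, lt_of_lt_of_le hu.2 (le_trans hrs
          (le_trans (le_of_lt hsI.2) hct))⟩
      obtain ⟨ξ, hξ, hξeq⟩ := exists_hasDerivAt_eq_slope φ (deriv φ) hr0 hcφr hdφr
      rw [← hξeq]
      exact le_of_lt (hall ξ ⟨hξ.1, lt_of_lt_of_le hξ.2 (lt_of_le_of_lt hrs hsI.2).le⟩
        (le_trans (le_of_lt hξ.2) hrs))
    have htend : Tendsto (slope φ 0) (nhdsWithin 0 (Ioi 0)) (nhds (deriv φ 0)) :=
      (hasDerivAt_iff_tendsto_slope.mp hφd0).mono_left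
        (nhdsWithin_mono _ (fun x hx => ne_of_gt hx))
    have hge : 0 ≤ deriv φ 0 := by
      refine ge_of_tendsto htend ?_
      filter_upwards [Ioc_mem_nhdsGT_of_mem (⟨le_refl (0:ℝ), hsI.1⟩ : (0:ℝ) ∈ Ico 0 s)]
        with r hr
      have := hslope r hr.1 hr.2
      rw [slope_def_field]
      simpa [div_eq_mul_inv] using this
    linarith
  -- the threshold
  set m : ℝ := (1/β + 3*t)⁻¹ / 2 with hm
  have hq : 0 < 1/β + 3*t := by positivity
  have hm0 : 0 < m := by positivity
  have h2m : (1/β + 3*t)⁻¹ = 2*m := by rw [hm]; ring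
  have hmβ : m < β := by
    have h1 : (1/β + 3*t)⁻¹ ≤ β := by
      rw [inv_le_comm₀ hq hβ0]
      have : β⁻¹ = 1/β := (one_div β).symm
      rw [this]
      linarith
    linarith
  -- the bad set
  set B : Set ℝ := (Icc 0 t ∩ H ⁻¹' (Iic m)) ∪
    (Icc 0 t ∩ (fun s => Real.exp (φ s) * H s ^ 2) ⁻¹' (Ici (1/6))) with hB
  have hBsub : B ⊆ Icc 0 t := by
    intro s hs
    rcases hs with h | h <;> exact h.1
  have hBbdd : BddBelow B := ⟨0, fun s hs => (hBsub hs).1⟩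
  have hBclosed : IsClosed B := by
    apply IsClosed.union
    · exact contH.preimage_isClosed_of_isClosed isClosed_Icc isClosed_Iic
    · exact contX.preimage_isClosed_of_isClosed isClosed_Icc isClosed_Ici
  have hmemB : ∀ s, s ∈ B ↔ s ∈ Icc 0 t ∧ (H s ≤ m ∨ 1/6 ≤ Real.exp (φ s) * H s ^ 2) := by
    intro s
    simp [hB, mem_Iic, mem_Ici, and_or_left]
  have hB0 : (0:ℝ) ∉ B := by
    rw [hmemB]
    rintro ⟨-, h | h⟩
    · rw [hH0] at h; linarith
    · rw [hφ0, hH0] at h; simp at h; linarith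
  -- claim: B is empty
  have hBempty : ¬ B.Nonempty := by
    intro hBne
    set T : ℝ := sInf B with hT
    have hTmem : T ∈ B := hBclosed.csInf_mem hBne hBbdd
    have hTIcc : T ∈ Icc 0 t := hBsub hTmem
    have hT0 : 0 < T := by
      rcases lt_or_eq_of_le hTIcc.1 with h | h
      · exact h
      · exact absurd (h ▸ hTmem) hB0
    have hgood : ∀ s ∈ Ico 0 T, m < H s ∧ Real.exp (φ s) * H s ^ 2 < 1/6 := by
      intro s hs
      have hsnB : s ∉ B := fun hmem => absurd (csInf_le hBbdd hmem) (not_le.mpr hs.2)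
      have hsIcc : s ∈ Icc 0 t := ⟨hs.1, le_trans (le_of_lt hs.2) hTIcc.2⟩
      rw [hmemB] at hsnB
      push_neg at hsnB
      exact hsnB hsIcc
    have hHposT : ∀ s ∈ Ioo 0 T, 0 < H s := fun s hs =>
      lt_trans hm0 (hgood s ⟨le_of_lt hs.1, hs.2⟩).1
    have hDnegT : ∀ s ∈ Ioo 0 T, deriv φ s < 0 := Dneg T hT0 hTIcc.2 hHposT
    have hsubT : Ioo 0 T ⊆ Ioo 0 t := Ioo_subset_Ioo le_rfl hTIcc.2
    have hbnd : ∀ s ∈ Ioo 0 T, deriv H s < -(H s)^2/2 ∧ -3*(H s)^2 ≤ deriv H s := by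
      intro s hs
      exact ptb s (hsubT hs) (hHposT s hs) (hDnegT s hs)
        (hgood s ⟨le_of_lt hs.1, hs.2⟩).2
    rw [hmemB] at hTmem
    rcases hTmem.2 with hcase | hcase
    · -- case H T ≤ m : contradiction via lower bound on H
      set k : ℝ → ℝ := fun s => (H s)⁻¹ - 3*s with hk
      have hkcont : ContinuousOn k (Ico 0 T) := by
        apply ContinuousOn.sub
        · apply ContinuousOn.inv₀
          · exact contH.mono (fun w hw => ⟨hw.1, le_trans (le_of_lt hw.2) hTIcc.2⟩)
          · intro w hw
            rcases eq_or_lt_of_le hw.1 with h | h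
            · rw [← h, hH0]; exact ne_of_gt hβ0
            · exact ne_of_gt (hHposT w ⟨h, hw.2⟩)
        · exact (continuous_const.mul continuous_id).continuousOn
      have hkder : ∀ s ∈ Ioo 0 T, HasDerivAt k (-(deriv H s) / (H s)^2 - 3) s := by
        intro s hs
        exact ((hHder s (hsubT hs)).inv (ne_of_gt (hHposT s hs))).sub
          (by simpa using (hasDerivAt_id s).const_mul (3:ℝ))
      have hanti : AntitoneOn k (Ico 0 T) := by
        apply antitoneOn_of_deriv_nonpos (convex_Ico 0 T) hkcont
        · intro s hs
          rw [interior_Ico] at hs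
          exact ((hkder s hs).differentiableAt).differentiableWithinAt
        · intro s hs
          rw [interior_Ico] at hs
          rw [(hkder s hs).deriv]
          have hH2 : 0 < (H s)^2 := pow_pos (hHposT s hs) 2
          have hb2 := (hbnd s hs).2
          have h3 : -(deriv H s) / (H s)^2 ≤ 3 := by
            rw [div_le_iff₀ hH2]; linarith
          linarith
      have hHpos' : ∀ s ∈ Ico 0 T, 0 < H s := by
        intro s hs
        rcases eq_or_lt_of_le hs.1 with h | h
        · rw [← h, hH0]; exact hβ0
        · exact hHposT s ⟨h, hs.2⟩
      have hlow : ∀ s ∈ Ico 0 T, 2*m ≤ H s := by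
        intro s hs
        have h0mem : (0:ℝ) ∈ Ico 0 T := ⟨le_refl 0, hT0⟩
        have hks := hanti h0mem hs hs.1
        have hk0 : k 0 = β⁻¹ := by simp [hk, hH0]
        rw [hk0] at hks
        have hHs : 0 < H s := hHpos' s hs
        have hst : s ≤ t := le_trans (le_of_lt hs.2) hTIcc.2
        have h1 : (H s)⁻¹ ≤ 1/β + 3*t := by
          have hkse : k s = (H s)⁻¹ - 3*s := rfl
          rw [hkse] at hks
          have : β⁻¹ = 1/β := by rw [one_div]
          linarith [this ▸ hks, hs.1, hst]
        have h2 : (1/β + 3*t)⁻¹ ≤ H s := by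
          have := inv_anti₀ (inv_pos.mpr hHs) h1
          rwa [inv_inv] at this
        rw [h2m] at h2
        exact h2
      have hC : IsClosed (Icc 0 t ∩ H ⁻¹' (Ici (2*m))) :=
        contH.preimage_isClosed_of_isClosed isClosed_Icc isClosed_Ici
      have hsubC : Ico 0 T ⊆ Icc 0 t ∩ H ⁻¹' (Ici (2*m)) := fun s hs =>
        ⟨⟨hs.1, le_trans (le_of_lt hs.2) hTIcc.2⟩, hlow s hs⟩
      have hTcl : T ∈ closure (Ico 0 T) := by
        rw [closure_Ico (ne_of_lt hT0)]
        exact ⟨le_of_lt hT0, le_refl T⟩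
      have hTC : T ∈ Icc 0 t ∩ H ⁻¹' (Ici (2*m)) :=
        hC.closure_subset ((closure_mono hsubC) hTcl)
      have : 2*m ≤ H T := hTC.2
      linarith
    · -- case 1/6 ≤ X T : contradiction via strict decrease of X
      have hXder : ∀ s ∈ Ioo 0 T, HasDerivAt (fun s => Real.exp (φ s) * H s ^ 2)
          (Real.exp (φ s) * deriv φ s * H s ^ 2 + Real.exp (φ s) * (2 * H s * deriv H s)) s := by
        intro s hs
        have := ((hφder s (hsubT hs)).exp.fun_mul ((hHder s (hsubT hs)).fun_pow 2))
        refine this.congr_deriv ?_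
        push_cast; ring
      have hXanti : StrictAntiOn (fun s => Real.exp (φ s) * H s ^ 2) (Icc 0 T) := by
        apply strictAntiOn_of_deriv_neg (convex_Icc 0 T)
          (contX.mono (Icc_subset_Icc le_rfl hTIcc.2))
        intro s hs
        rw [interior_Icc] at hs
        rw [(hXder s hs).deriv]
        have hE := Real.exp_pos (φ s)
        have hHs := hHposT s hs
        have hDs := hDnegT s hs
        have hH's : deriv H s < 0 := by
          have := (hbnd s hs).1
          nlinarith [pow_pos hHs 2]
        have t1 : Real.exp (φ s) * deriv φ s * H s ^ 2 < 0 :=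
          mul_neg_of_neg_of_pos (mul_neg_of_pos_of_neg hE hDs) (pow_pos hHs 2)
        have t2 : Real.exp (φ s) * (2 * H s * deriv H s) < 0 :=
          mul_neg_of_pos_of_neg hE (by nlinarith)
        linarith
      have hXlt := hXanti (⟨le_refl (0:ℝ), le_of_lt hT0⟩ : (0:ℝ) ∈ Icc 0 T)
        (⟨le_of_lt hT0, le_refl T⟩ : T ∈ Icc 0 T) hT0
      have hXlt' : Real.exp (φ T) * H T ^ 2 < Real.exp (φ 0) * H 0 ^ 2 := hXlt
      rw [hφ0, hH0, Real.exp_zero, one_mul] at hXlt'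
      linarith
  -- B is empty: conclude
  have hgoodAll : ∀ s ∈ Icc 0 t, m < H s ∧ Real.exp (φ s) * H s ^ 2 < 1/6 := by
    intro s hs
    have hnB : s ∉ B := fun h => hBempty ⟨s, h⟩
    rw [hmemB] at hnB
    push_neg at hnB
    exact hnB hs
  have hHpos : ∀ s ∈ Ioo 0 t, 0 < H s := fun s hs =>
    lt_trans hm0 (hgoodAll s ⟨le_of_lt hs.1, le_of_lt hs.2⟩).1
  have hDnegt : ∀ s ∈ Ioo 0 t, deriv φ s < 0 := Dneg t ht le_rfl hHpos
  have hbnd : ∀ s ∈ Ioo 0 t, deriv H s < -(H s)^2/2 := fun s hs =>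
    (ptb s hs (hHpos s hs) (hDnegt s hs) (hgoodAll s ⟨le_of_lt hs.1, le_of_lt hs.2⟩).2).1
  have hHposIcc : ∀ s ∈ Icc 0 t, 0 < H s := fun s hs => lt_trans hm0 (hgoodAll s hs).1
  set G : ℝ → ℝ := fun s => (H s)⁻¹ - s/2 with hG
  have hGcont : ContinuousOn G (Icc 0 t) := by
    apply ContinuousOn.sub
    · exact contH.inv₀ (fun w hw => ne_of_gt (hHposIcc w hw))
    · exact (continuous_id.div_const 2).continuousOn
  have hGder : ∀ s ∈ Ioo 0 t, HasDerivAt G (-(deriv H s)/(H s)^2 - 1/2) s := by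
    intro s hs
    exact ((hHder s hs).inv (ne_of_gt (hHpos s hs))).sub
      (by simpa using (hasDerivAt_id s).div_const 2)
  have hGmono : StrictMonoOn G (Icc 0 t) := by
    apply strictMonoOn_of_deriv_pos (convex_Icc 0 t) hGcont
    intro s hs
    rw [interior_Icc] at hs
    rw [(hGder s hs).deriv]
    have hH2 : 0 < (H s)^2 := pow_pos (hHpos s hs) 2
    have hb1 := hbnd s hs
    have h2 : 1/2 < -(deriv H s)/(H s)^2 := by rw [lt_div_iff₀ hH2]; linarith
    linarith
  have hGlt : G 0 < G t := hGmono ⟨le_refl 0, le_of_lt ht⟩ ⟨le_of_lt ht, le_refl t⟩ ht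
  have hG0 : G 0 = β⁻¹ := by simp [hG, hH0]
  have hGt : G t = (H t)⁻¹ - t/2 := rfl
  rw [hG0, hGt] at hGlt
  have hHt : 0 < H t := hHposIcc t ⟨le_of_lt ht, le_refl t⟩
  have ha : 0 < (1/2)*t + 1/β := by positivity
  have hlt : (1/2)*t + 1/β < (H t)⁻¹ := by
    have h1 : β⁻¹ = 1/β := by rw [one_div]
    linarith [h1 ▸ hGlt]
  rw [lt_div_iff₀ ha]
  have hfin := mul_lt_mul_of_pos_left hlt hHt
  rwa [mul_inv_cancel₀ (ne_of_gt hHt)] at hfin
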